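/- Let p be an odd positive integer, let r,s ≥ 1 be integers, and set x = 2(r+s)−1. Define F on the disjoint union of the index sets {1,…,p}×{1,…,r}, {1,…,p}×{1,…,s}, and {1,…,p}×{1,…,r+s−1} by F(u-index (i,j)) = j + (i−1)·x, F(v-index (k,ℓ)) = (2r+s−1) + ℓ + (((p−1)/2 + k − 1) mod p)·x, and F(e-index (q,t)) = r + t + ((2p − 2q + 1) mod p)·x. Then F is a bijection onto {1, 2, …, x·p}. -/

import Mathlib

lemma cat_dec {x a b m n : ℕ} (ha1 : 1 ≤ a) (hax : a ≤ x) (hb1 : 1 ≤ b) (hbx : b ≤ x)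
    (h : a + m * x = b + n * x) : a = b ∧ m = n := by
  rcases le_total m n with hmn | hmn
  · obtain ⟨d, rfl⟩ := Nat.exists_eq_add_of_le hmn
    rw [add_mul] at h
    rcases Nat.eq_zero_or_pos d with rfl | hd
    · simp at h ⊢; omega
    · have : x ≤ d * x := Nat.le_mul_of_pos_left x hd
      omega
  · obtain ⟨d, rfl⟩ := Nat.exists_eq_add_of_le hmn
    rw [add_mul] at h
    rcases Nat.eq_zero_or_pos d with rfl | hd
    · simp at h ⊢; omega
    · have : x ≤ d * x := Nat.le_mul_of_pos_left x hd
      omega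

lemma cat_mod_shift_inj {p c k1 k2 : ℕ} (h1 : k1 < p) (h2 : k2 < p)
    (h : (c + k1) % p = (c + k2) % p) : k1 = k2 := by
  have hm : k1 ≡ k2 [MOD p] := Nat.ModEq.add_left_cancel' c h
  exact hm.eq_of_lt_of_lt h1 h2

lemma cat_e_inj {p q1 q2 : ℕ} (hp : Odd p) (h1 : q1 < p) (h2 : q2 < p)
    (h : (2 * p - 2 * (q1 + 1) + 1) % p = (2 * p - 2 * (q2 + 1) + 1) % p) : q1 = q2 := by
  have hm : (2 * p - 2 * (q1 + 1) + 1) ≡ (2 * p - 2 * (q2 + 1) + 1) [MOD p] := h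
  have hm2 := hm.add_right (2 * (q1 + 1) + 2 * (q2 + 1))
  have e1 : (2 * p - 2 * (q1 + 1) + 1) + (2 * (q1 + 1) + 2 * (q2 + 1))
      = (2 * p + 1) + 2 * (q2 + 1) := by omega
  have e2 : (2 * p - 2 * (q2 + 1) + 1) + (2 * (q1 + 1) + 2 * (q2 + 1))
      = (2 * p + 1) + 2 * (q1 + 1) := by omega
  rw [e1, e2] at hm2
  have hm3 : 2 * (q2 + 1) ≡ 2 * (q1 + 1) [MOD p] := Nat.ModEq.add_left_cancel' _ hm2
  have hdvd : ¬ 2 ∣ p := by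
    have := Nat.odd_iff.mp hp; omega
  have hcop : Nat.gcd p 2 = 1 :=
    Nat.Coprime.symm ((Nat.Prime.coprime_iff_not_dvd Nat.prime_two).mpr hdvd)
  have hm4 : (q2 + 1) ≡ (q1 + 1) [MOD p] := Nat.ModEq.cancel_left_of_coprime hcop hm3
  have hm5 : q2 ≡ q1 [MOD p] := Nat.ModEq.add_right_cancel' 1 hm4
  exact (hm5.eq_of_lt_of_lt h2 h1).symm

/-- Let `p` be an odd positive integer, `r, s ≥ 1`, and `x = 2(r+s)−1`.
The function sending the `u`-index `(i, j)` (with `1 ≤ i ≤ p`, `1 ≤ j ≤ r`; here 0-based)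
to `j + (i−1)x`, the `v`-index `(k, ℓ)` to `(2r+s−1) + ℓ + (((p−1)/2 + k − 1) mod p)·x`,
and the `e`-index `(q, t)` to `r + t + ((2p − 2q + 1) mod p)·x`, is a bijection from the
disjoint union of the index sets onto `{1, 2, …, x·p}`. -/
theorem caterpillar_labels_bijective (p r s : ℕ) (hp : Odd p) (hp1 : 1 ≤ p)
    (hr : 1 ≤ r) (hs : 1 ≤ s) :
    Set.BijOn
      (Sum.elim
        (fun z : Fin p × Fin r =>
          (z.2.val + 1) + z.1.val * (2 * (r + s) - 1))
        (Sum.elim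
          (fun z : Fin p × Fin s =>
            (2 * r + s - 1) + (z.2.val + 1) +
              (((p - 1) / 2 + z.1.val) % p) * (2 * (r + s) - 1))
          (fun z : Fin p × Fin (r + s - 1) =>
            r + (z.2.val + 1) +
              ((2 * p - 2 * (z.1.val + 1) + 1) % p) * (2 * (r + s) - 1))))
      Set.univ (Set.Icc 1 ((2 * (r + s) - 1) * p)) := by
  set x := 2 * (r + s) - 1 with hxdef
  have hx3 : 3 ≤ x := by omega
  have hmem : ∀ a m : ℕ, 1 ≤ a → a ≤ x → m < p → a + m * x ∈ Set.Icc 1 (x * p) := by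
    intro a m h1 h2 h3
    constructor
    · omega
    · calc a + m * x ≤ x + m * x := Nat.add_le_add_right h2 _
        _ = (m + 1) * x := by ring
        _ ≤ p * x := Nat.mul_le_mul_right x (by omega)
        _ = x * p := Nat.mul_comm _ _
  have hmaps : Set.MapsTo
      (Sum.elim
        (fun z : Fin p × Fin r => (z.2.val + 1) + z.1.val * x)
        (Sum.elim
          (fun z : Fin p × Fin s =>
            (2 * r + s - 1) + (z.2.val + 1) + (((p - 1) / 2 + z.1.val) % p) * x)
          (fun z : Fin p × Fin (r + s - 1) =>
            r + (z.2.val + 1) + ((2 * p - 2 * (z.1.val + 1) + 1) % p) * x)))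
      Set.univ (Set.Icc 1 (x * p)) := by
    rintro (⟨i, j⟩ | ⟨k, l⟩ | ⟨q, t⟩) -
    · have hj := j.isLt
      exact hmem _ _ (by omega) (by omega) i.isLt
    · have hl := l.isLt
      exact hmem _ _ (by omega) (by omega) (Nat.mod_lt _ (by omega))
    · have ht := t.isLt
      exact hmem _ _ (by omega) (by omega) (Nat.mod_lt _ (by omega))
  have hinj : Set.InjOn
      (Sum.elim
        (fun z : Fin p × Fin r => (z.2.val + 1) + z.1.val * x)
        (Sum.elim
          (fun z : Fin p × Fin s =>
            (2 * r + s - 1) + (z.2.val + 1) + (((p - 1) / 2 + z.1.val) % p) * x)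
          (fun z : Fin p × Fin (r + s - 1) =>
            r + (z.2.val + 1) + ((2 * p - 2 * (z.1.val + 1) + 1) % p) * x)))
      Set.univ := by
    rintro (⟨i1, j1⟩ | ⟨k1, l1⟩ | ⟨q1, t1⟩) - (⟨i2, j2⟩ | ⟨k2, l2⟩ | ⟨q2, t2⟩) - h <;>
      simp only [Sum.elim_inl, Sum.elim_inr] at h
    · have hj1 := j1.isLt; have hj2 := j2.isLt
      obtain ⟨h1, h2⟩ := cat_dec (by omega) (by omega) (by omega) (by omega) h
      simp only [Sum.inl.injEq, Prod.mk.injEq]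
      exact ⟨Fin.ext h2, Fin.ext (by omega)⟩
    · have hj1 := j1.isLt; have hl2 := l2.isLt
      obtain ⟨h1, -⟩ := cat_dec (by omega) (by omega) (by omega) (by omega) h
      omega
    · have hj1 := j1.isLt; have ht2 := t2.isLt
      obtain ⟨h1, -⟩ := cat_dec (by omega) (by omega) (by omega) (by omega) h
      omega
    · have hl1 := l1.isLt; have hj2 := j2.isLt
      obtain ⟨h1, -⟩ := cat_dec (by omega) (by omega) (by omega) (by omega) h
      omega
    · have hl1 := l1.isLt; have hl2 := l2.isLt
      obtain ⟨h1, h2⟩ := cat_dec (by omega) (by omega) (by omega) (by omega) h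
      simp only [Sum.inr.injEq, Sum.inl.injEq, Prod.mk.injEq]
      exact ⟨Fin.ext (cat_mod_shift_inj k1.isLt k2.isLt h2), Fin.ext (by omega)⟩
    · have hl1 := l1.isLt; have ht2 := t2.isLt
      obtain ⟨h1, -⟩ := cat_dec (by omega) (by omega) (by omega) (by omega) h
      omega
    · have ht1 := t1.isLt; have hj2 := j2.isLt
      obtain ⟨h1, -⟩ := cat_dec (by omega) (by omega) (by omega) (by omega) h
      omega
    · have ht1 := t1.isLt; have hl2 := l2.isLt
      obtain ⟨h1, -⟩ := cat_dec (by omega) (by omega) (by omega) (by omega) h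
      omega
    · have ht1 := t1.isLt; have ht2 := t2.isLt
      obtain ⟨h1, h2⟩ := cat_dec (by omega) (by omega) (by omega) (by omega) h
      simp only [Sum.inr.injEq, Prod.mk.injEq]
      exact ⟨Fin.ext (cat_e_inj hp q1.isLt q2.isLt h2), Fin.ext (by omega)⟩
  refine ⟨hmaps, hinj, ?_⟩
  have key : x * p = p * r + (p * s + p * (r + s - 1)) := by
    have h1 : x = r + (s + (r + s - 1)) := by omega
    rw [Nat.mul_comm, h1, Nat.mul_add, Nat.mul_add]
  have himg : (Sum.elim
        (fun z : Fin p × Fin r => (z.2.val + 1) + z.1.val * x)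
        (Sum.elim
          (fun z : Fin p × Fin s =>
            (2 * r + s - 1) + (z.2.val + 1) + (((p - 1) / 2 + z.1.val) % p) * x)
          (fun z : Fin p × Fin (r + s - 1) =>
            r + (z.2.val + 1) + ((2 * p - 2 * (z.1.val + 1) + 1) % p) * x))) '' Set.univ
      = Set.Icc 1 (x * p) := by
    apply Set.eq_of_subset_of_ncard_le (Set.mapsTo_iff_image_subset.mp hmaps)
    · rw [Set.ncard_image_of_injOn hinj, Set.ncard_univ,
        show Set.Icc 1 (x * p) = ↑(Finset.Icc 1 (x * p)) from (Finset.coe_Icc _ _).symm,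
        Set.ncard_coe_finset, Nat.card_Icc]
      simp only [Nat.card_eq_fintype_card, Fintype.card_sum, Fintype.card_prod,
        Fintype.card_fin]
      rw [key]
      omega
  rw [Set.SurjOn, ← himg]
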